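/- For every real w with w > √3, the function g(w) := (1/2)·log(2w/(1 + w²)^{1/2} − √3) is differentiable and g'(w) = 1/(2w³ + 2w − √3(1 + w²)^{3/2}). -/

import Mathlib

/-- for `w > √3`, the function `g(w) = (1/2)·log(2w/√(1+w²) − √3)` is
differentiable with `g'(w) = 1/(2w³ + 2w − √3(1+w²)^{3/2})`. -/
theorem stmt_10 :
    ∀ w : ℝ, Real.sqrt 3 < w →
      HasDerivAt (fun w' : ℝ =>
          (1 / 2) * Real.log (2 * w' / Real.sqrt (1 + w' ^ 2) - Real.sqrt 3))
        (1 / (2 * w ^ 3 + 2 * w - Real.sqrt 3 * (Real.sqrt (1 + w ^ 2)) ^ 3)) w := by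
  intro w hw
  have h3 : (0:ℝ) < Real.sqrt 3 := Real.sqrt_pos.mpr (by norm_num)
  have hw0 : 0 < w := lt_trans h3 hw
  have hs0 : 0 < Real.sqrt (1 + w ^ 2) := Real.sqrt_pos.mpr (by positivity)
  have hs2 : Real.sqrt (1 + w ^ 2) ^ 2 = 1 + w ^ 2 := Real.sq_sqrt (by positivity)
  have h3sq : Real.sqrt 3 ^ 2 = 3 := Real.sq_sqrt (by norm_num)
  have hw2 : 3 < w ^ 2 := by nlinarith
  have hkey : Real.sqrt 3 * Real.sqrt (1 + w ^ 2) < 2 * w := by nlinarith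
  have hpos : 0 < 2 * w / Real.sqrt (1 + w ^ 2) - Real.sqrt 3 := by
    rw [sub_pos, lt_div_iff₀ hs0]
    linarith
  have hden : 0 < 2 * w ^ 3 + 2 * w - Real.sqrt 3 * (Real.sqrt (1 + w ^ 2)) ^ 3 := by
    nlinarith
  have h1 : HasDerivAt (fun w' : ℝ => 1 + w' ^ 2) (2 * w) w := by
    simpa using (hasDerivAt_pow 2 w).const_add 1
  have hsq : HasDerivAt (fun w' : ℝ => Real.sqrt (1 + w' ^ 2))
      (w / Real.sqrt (1 + w ^ 2)) w := by
    have h := (Real.hasDerivAt_sqrt (by positivity : (1 + w ^ 2) ≠ 0)).comp w h1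
    refine h.congr_deriv ?_
    symm
    field_simp
  have hnum : HasDerivAt (fun w' : ℝ => 2 * w') 2 w := by
    simpa using (hasDerivAt_id w).const_mul 2
  have hdiv : HasDerivAt (fun w' : ℝ => 2 * w' / Real.sqrt (1 + w' ^ 2))
      ((2 * Real.sqrt (1 + w ^ 2) - 2 * w * (w / Real.sqrt (1 + w ^ 2))) /
        Real.sqrt (1 + w ^ 2) ^ 2) w := hnum.div hsq hs0.ne'
  have hsub := hdiv.sub_const (Real.sqrt 3)
  have hlog := hsub.log hpos.ne'
  have hfinal := hlog.const_mul (1 / 2 : ℝ)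
  have e1 : 2 * Real.sqrt (1 + w ^ 2) - 2 * w * (w / Real.sqrt (1 + w ^ 2)) =
      2 / Real.sqrt (1 + w ^ 2) := by
    field_simp
    linear_combination hs2
  have e3 : 2 * w / Real.sqrt (1 + w ^ 2) - Real.sqrt 3 =
      (2 * w - Real.sqrt 3 * Real.sqrt (1 + w ^ 2)) / Real.sqrt (1 + w ^ 2) := by
    field_simp
  have hk0 : 2 * w - Real.sqrt 3 * Real.sqrt (1 + w ^ 2) ≠ 0 := by linarith
  refine hfinal.congr_deriv ?_
  symm
  rw [e1, e3]
  have hD := hden.ne'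
  field_simp
  rw [div_eq_one_iff_eq (by linarith [hden])]
  linear_combination 2 * w * hs2
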